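/- For a compact complex surface with c₁ = 0 (e.g. a K3 surface with c₂ = 24), the degree-4 elliptic genus formula jac(M) = (c₂/12)·b₂ gives jac(K3) = 2b₂; in particular, in the ring ℤ[b₂,b₃,b₄,b₈]/(4b₈+b₄²−b₂b₃²), the element 2b₂ is in the image subring generated by 2b₂,b₃,b₄,b₂²,b₂b₃,b₂b₄,b₈ but b₂ itself is not, so the elliptic genus of a K3 surface is divisible by 2 in jF while its half is not a genus of any SU-manifold. -/
import Mathlib


open MvPolynomial

noncomputable def jFIdeal : Ideal (MvPolynomial (Fin 4) ℤ) :=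
  Ideal.span {4 * X 3 + (X 2) ^ 2 - X 0 * (X 1) ^ 2}

noncomputable abbrev jF : Type := MvPolynomial (Fin 4) ℤ ⧸ jFIdeal

noncomputable def b2 : jF := Ideal.Quotient.mk jFIdeal (X 0)
noncomputable def b3 : jF := Ideal.Quotient.mk jFIdeal (X 1)
noncomputable def b4 : jF := Ideal.Quotient.mk jFIdeal (X 2)
noncomputable def b8 : jF := Ideal.Quotient.mk jFIdeal (X 3)

/-- The subring of `jF` generated by `2b₂, b₃, b₄, b₂², b₂b₃, b₂b₄, b₈`. -/
noncomputable def S : Subring jF :=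
  Subring.closure {2 * b2, b3, b4, b2 ^ 2, b2 * b3, b2 * b4, b8}

noncomputable def φ₀ : MvPolynomial (Fin 4) ℤ →+* DualNumber (ZMod 2) :=
  MvPolynomial.eval₂Hom (Int.castRingHom _) (fun i => if i = 0 then DualNumber.eps else 0)

lemma φ₀_rel : φ₀ (4 * X 3 + (X 2) ^ 2 - X 0 * (X 1) ^ 2) = 0 := by
  simp [φ₀]

noncomputable def φ : jF →+* DualNumber (ZMod 2) :=
  Ideal.Quotient.lift jFIdeal φ₀ (by
    intro p hp
    rw [jFIdeal, Ideal.mem_span_singleton] at hp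
    obtain ⟨q, rfl⟩ := hp
    rw [map_mul, φ₀_rel, zero_mul])

lemma φ_b2 : φ b2 = DualNumber.eps := by
  simp [φ, b2, φ₀]

lemma two_eps : (2 : DualNumber (ZMod 2)) * DualNumber.eps = 0 := by
  ext <;> simp <;> decide

/-- The elliptic genus of a K3 surface, `jac(K3) = 2b₂`, lies in the image subring
`S` of the SU-bordism ring, but its half `b₂` does not: so the elliptic genus of K3 is
divisible by 2 in `jF` while its half is not the genus of any SU-manifold. -/
theorem stmt18 : 2 * b2 ∈ S ∧ b2 ∉ S := by
  constructor
  · exact Subring.subset_closure (by simp)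
  · intro h
    have hle : S ≤ (⊥ : Subring (DualNumber (ZMod 2))).comap φ := by
      rw [S, Subring.closure_le]
      intro x hx
      simp only [Set.mem_insert_iff, Set.mem_singleton_iff] at hx
      have hz : φ x = 0 := by
        rcases hx with rfl|rfl|rfl|rfl|rfl|rfl|rfl
        · rw [map_mul, φ_b2, map_ofNat, two_eps]
        · simp [φ, b3, φ₀]
        · simp [φ, b4, φ₀]
        · rw [map_pow, φ_b2, sq, DualNumber.eps_mul_eps]
        · rw [map_mul, φ_b2, show φ b3 = 0 by simp [φ, b3, φ₀], mul_zero]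
        · rw [map_mul, φ_b2, show φ b4 = 0 by simp [φ, b4, φ₀], mul_zero]
        · simp [φ, b8, φ₀]
      simp only [SetLike.mem_coe, Subring.mem_comap, hz]
      exact Subring.zero_mem _
    have := hle h
    rw [Subring.mem_comap, Subring.mem_bot, φ_b2] at this
    obtain ⟨n, hn⟩ := this
    have h2 := congrArg TrivSqZeroExt.snd hn
    rw [TrivSqZeroExt.snd_intCast, DualNumber.snd_eps] at h2
    exact zero_ne_one h2
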